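/- Define W : ℂ⁶ × ℂ⁶ → (exterior algebra of ℂ⁶) by W(t,u) := (α + t₁₁ᾱ + t₁₂β̄)∧(γ + t₃₁ᾱ + t₃₂β̄ − D(t)γ̄)∧(ᾱ + u₁₁α + u₁₂β)∧(γ̄ + u₃₁α + u₃₂β − D(u)γ), where D(t) := t₁₁t₂₂ − t₁₂t₂₁ and u plays the role of the conjugate parameter t̄. Then for each fixed t, the map u ↦ W(t,u) is ℂ-differentiable, and its derivative at (t,u) = (0,0) in the direction w ∈ ℂ⁶ equals −w₁₂·(α∧β∧γ∧γ̄) + w₃₂·(α∧β∧γ∧ᾱ). (This is the computation (6.1st_deriv_G) of the paper: the only nonvanishing anti-holomorphic first-order derivatives at t = 0 of α_t∧γ_t∧ᾱ_t∧γ̄_t are ∂/∂t̄₁₂ = −α∧β∧γ∧γ̄ and ∂/∂t̄₃₂ = α∧β∧γ∧ᾱ; it is the key step in proving that F_𝒢ℋ⁴ is a holomorphic subbundle, Lemma 6.6.) -/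

import Mathlib

noncomputable section

/-- The exterior algebra of `ℂ⁶` in which all cohomology computations on the Iwasawa
manifold are carried out. -/
abbrev Λ6 : Type := ExteriorAlgebra ℂ (Fin 6 → ℂ)

/-- The degree-one generator corresponding to the `i`-th basis vector of `ℂ⁶`. -/
def gen (i : Fin 6) : Λ6 := ExteriorAlgebra.ι ℂ (Pi.single i (1 : ℂ))

/-- `α` -/ def α : Λ6 := gen 0
/-- `β` -/ def β : Λ6 := gen 1
/-- `γ` -/ def γ : Λ6 := gen 2
/-- `ᾱ` -/ def α' : Λ6 := gen 3
/-- `β̄` -/ def β' : Λ6 := gen 4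
/-- `γ̄` -/ def γ' : Λ6 := gen 5

-- indexing convention for parameters: t 0 = t₁₁, t 1 = t₁₂, t 2 = t₂₁, t 3 = t₂₂,
-- t 4 = t₃₁, t 5 = t₃₂ (and the same for u, which plays the role of t̄).

/-- `D(t) = t₁₁t₂₂ − t₁₂t₂₁` -/
def Dd (t : Fin 6 → ℂ) : ℂ := t 0 * t 3 - t 1 * t 2

/-- The Aeppli representative `α_t∧γ_t∧ᾱ_t∧γ̄_t` with the conjugated parameters treated
as the independent variables `u`. -/
def W (t u : Fin 6 → ℂ) : Λ6 :=
  (α + t 0 • α' + t 1 • β') * (γ + t 4 • α' + t 5 • β' - Dd t • γ') *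
    (α' + u 0 • α + u 1 • β) * (γ' + u 4 • α + u 5 • β - Dd u • γ)

/- ### Auxiliary lemmas -/

lemma gen_sq (i : Fin 6) : gen i * gen i = 0 := ExteriorAlgebra.ι_sq_zero _

lemma gen_swap (i j : Fin 6) : gen i * gen j = -(gen j * gen i) := by
  have := ExteriorAlgebra.ι_add_mul_swap (R := ℂ)
    (Pi.single i (1:ℂ) : Fin 6 → ℂ) (Pi.single j (1:ℂ))
  unfold gen
  exact eq_neg_of_add_eq_zero_left this

lemma gen_sq' (i : Fin 6) (x : Λ6) : gen i * (gen i * x) = 0 := by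
  rw [← mul_assoc, gen_sq, zero_mul]

lemma gen_swap' (i j : Fin 6) (x : Λ6) : gen i * (gen j * x) = -(gen j * (gen i * x)) := by
  rw [← mul_assoc, gen_swap, neg_mul, mul_assoc]

lemma E1 : α * γ * (α * γ') = 0 := by
  simp [α, γ, γ', mul_assoc, gen_sq', gen_swap' 2 0]

lemma E2 : α * γ * (α' * α) = 0 := by
  simp [α, γ, α', mul_assoc, gen_sq', gen_swap' 2 0, gen_swap' 3 0, gen_swap 3 0]

lemma E3 : α * γ * (α' * β) = α * β * γ * α' := by
  simp [α, β, γ, α', mul_assoc, gen_swap' 2 1, gen_swap 3 1, gen_swap' 3 1]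

lemma E4 : α * γ * (β * γ') = -(α * β * γ * γ') := by
  simp [α, β, γ, γ', mul_assoc, gen_swap' 2 1]

/-- The product of the first two (constant-in-`u`) factors of `W t u`. -/
def Pt (t : Fin 6 → ℂ) : Λ6 :=
  (α + t 0 • α' + t 1 • β') * (γ + t 4 • α' + t 5 • β' - Dd t • γ')

lemma W_assoc (t u : Fin 6 → ℂ) : W t u =
    Pt t * ((α' + u 0 • α + u 1 • β) * (γ' + u 4 • α + u 5 • β - Dd u • γ)) := by
  unfold W Pt; rw [mul_assoc]

lemma W_expand (t u : Fin 6 → ℂ) : W t u =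
    Pt t * (α' * γ')
    + u 0 • (Pt t * (α * γ')) + u 1 • (Pt t * (β * γ'))
    + u 4 • (Pt t * (α' * α)) + u 5 • (Pt t * (α' * β))
    - Dd u • (Pt t * (α' * γ))
    + (u 0 * u 4) • (Pt t * (α * α)) + (u 0 * u 5) • (Pt t * (α * β))
    - (u 0 * Dd u) • (Pt t * (α * γ))
    + (u 1 * u 4) • (Pt t * (β * α)) + (u 1 * u 5) • (Pt t * (β * β))
    - (u 1 * Dd u) • (Pt t * (β * γ)) := by
  rw [W_assoc]
  simp only [mul_add, add_mul, mul_sub, sub_mul, smul_mul_assoc, mul_smul_comm, smul_smul,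
    mul_assoc]
  module

lemma fW (t : Fin 6 → ℂ) (f : Λ6 →ₗ[ℂ] ℂ) : (fun u => f (W t u)) = fun u =>
    f (Pt t * (α' * γ'))
    + u 0 * f (Pt t * (α * γ')) + u 1 * f (Pt t * (β * γ'))
    + u 4 * f (Pt t * (α' * α)) + u 5 * f (Pt t * (α' * β))
    - Dd u * f (Pt t * (α' * γ))
    + (u 0 * u 4) * f (Pt t * (α * α)) + (u 0 * u 5) * f (Pt t * (α * β))
    - (u 0 * Dd u) * f (Pt t * (α * γ))
    + (u 1 * u 4) * f (Pt t * (β * α)) + (u 1 * u 5) * f (Pt t * (β * β))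
    - (u 1 * Dd u) * f (Pt t * (β * γ)) := by
  funext u
  rw [W_expand]
  simp [smul_eq_mul]

lemma Pt0 : Pt 0 = α * γ := by simp [Pt, Dd]

/-- For each fixed `t`, the map `u ↦ W(t,u)` is ℂ-differentiable, and its derivative at
`(t,u) = (0,0)` in the direction `w` equals `−w₁₂·(α∧β∧γ∧γ̄) + w₃₂·(α∧β∧γ∧ᾱ)`. Since the
exterior algebra `Λ6` is a finite-dimensional complex vector space (which carries no
distinguished norm in Mathlib), differentiability and the value of the derivative are
expressed, equivalently, after composing with an arbitrary ℂ-linear functional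
`f : Λ6 →ₗ[ℂ] ℂ`. -/
theorem antiholomorphic_derivative_of_Aeppli_generator :
    (∀ (t : Fin 6 → ℂ) (f : Λ6 →ₗ[ℂ] ℂ), Differentiable ℂ (fun u => f (W t u))) ∧
    (∀ (w : Fin 6 → ℂ) (f : Λ6 →ₗ[ℂ] ℂ),
      fderiv ℂ (fun u => f (W 0 u)) 0 w
        = f ((-(w 1)) • (α * β * γ * γ') + w 5 • (α * β * γ * α'))) := by
  constructor
  · intro t f
    rw [fW]
    unfold Dd
    fun_prop
  · intro w f
    have h0 : ∀ i : Fin 6, HasFDerivAt (𝕜 := ℂ) (fun u : Fin 6 → ℂ => u i)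
        (ContinuousLinearMap.proj i) (0 : Fin 6 → ℂ) :=
      fun i => hasFDerivAt_apply i 0
    have quad : ∀ i j : Fin 6, HasFDerivAt (fun u : Fin 6 → ℂ => u i * u j)
        (0 : (Fin 6 → ℂ) →L[ℂ] ℂ) 0 := by
      intro i j
      exact ((h0 i).mul (h0 j)).congr_fderiv (by ext; simp)
    have hDd : HasFDerivAt Dd (0 : (Fin 6 → ℂ) →L[ℂ] ℂ) 0 := by
      have := (quad 0 3).sub (quad 1 2)
      exact this.congr_fderiv (by simp)
    have hquadD : ∀ i : Fin 6, HasFDerivAt (fun u : Fin 6 → ℂ => u i * Dd u)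
        (0 : (Fin 6 → ℂ) →L[ℂ] ℂ) 0 := by
      intro i
      exact ((h0 i).mul hDd).congr_fderiv (by ext; simp [Dd])
    have H := ((hasFDerivAt_const
        (f (Pt 0 * (α' * γ'))) (0 : Fin 6 → ℂ)).add
      ((h0 0).mul_const (f (Pt 0 * (α * γ'))))).add
      ((h0 1).mul_const (f (Pt 0 * (β * γ'))))
    have H := (H.add ((h0 4).mul_const (f (Pt 0 * (α' * α))))).add
      ((h0 5).mul_const (f (Pt 0 * (α' * β))))
    have H := H.sub (hDd.mul_const (f (Pt 0 * (α' * γ))))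
    have H := (H.add ((quad 0 4).mul_const (f (Pt 0 * (α * α))))).add
      ((quad 0 5).mul_const (f (Pt 0 * (α * β))))
    have H := H.sub ((hquadD 0).mul_const (f (Pt 0 * (α * γ))))
    have H := (H.add ((quad 1 4).mul_const (f (Pt 0 * (β * α))))).add
      ((quad 1 5).mul_const (f (Pt 0 * (β * β))))
    have H := H.sub ((hquadD 1).mul_const (f (Pt 0 * (β * γ))))
    rw [fW]
    simp only [Pi.add_def, Pi.sub_def] at H
    rw [H.fderiv]
    simp only [Pt0, E1, E2, E3, E4, ContinuousLinearMap.add_apply,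
      ContinuousLinearMap.sub_apply, ContinuousLinearMap.smul_apply,
      ContinuousLinearMap.zero_apply, ContinuousLinearMap.proj_apply,
      smul_eq_mul, map_add, map_smul, map_neg, map_zero, zero_mul, mul_zero, smul_zero,
      zero_smul, add_zero, zero_add, sub_zero, zero_sub, neg_zero]
    ring
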